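/- (Discrete energy conservation of Splitting method II.) Let I, J, K ≥ 3 be odd integers, ε, μ, τ, h_x, h_y, h_z > 0 and λ ∈ ℝ. Let E_m⁰, H_m⁰, E_m^{[1]}, H_m^{[1]}, E_m^{[2]}, H_m^{[2]}, E_m^{[3]}, H_m^{[3]}, E_m¹, H_m¹ : Fin I × Fin J × Fin K → ℝ (m = 1,2,3) be grid fields and θ : Fin I × Fin J × Fin K → ℝ. Assume: (Stage 1) E₁^{[1]} = E₁⁰ and H₁^{[1]} = H₁⁰; for every (j,k), the stacked x-slice vector (ε(E₂^{[1]} − E₂⁰)_{·,j,k}, μ(H₃^{[1]} − H₃⁰)_{·,j,k}) equals −(τ/h_x)·𝒜_I⁻¹ℬ_I applied to ((E₂^{[1]} + E₂⁰)/2, (H₃^{[1]} + H₃⁰)/2)_{·,j,k}, and the stacked x-slice vector for the pair (E₃, H₂) satisfies the same relation with factor +τ/h_x. (Stage 2) E₂^{[2]} = E₂^{[1]} and H₂^{[2]} = H₂^{[1]}; for every (i,k), the stacked y-slice relation holds for the pair (E₃, H₁) with factor −τ/h_y and matrices 𝒜_J⁻¹ℬ_J, and for the pair (E₁, H₃) with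 factor +τ/h_y. (Stage 3) E₃^{[3]} = E₃^{[2]} and H₃^{[3]} = H₃^{[2]}; for every (i,j), the stacked z-slice relation holds for the pair (E₁, H₂) with factor −τ/h_z and matrices 𝒜_K⁻¹ℬ_K, and for the pair (E₂, H₁) with factor +τ/h_z. (Stage 4) at every grid point (i,j,k), with c = cos(λθ(i,j,k)/√(εμ)) and s = sin(λθ(i,j,k)/√(εμ)), one has E_m¹ = c E_m^{[3]} − √(μ/ε) s H_m^{[3]} and H_m¹ = √(ε/μ) s E_m^{[3]} + c H_m^{[3]} for m = 1,2,3. Then the discrete energy is conserved: ℰ(E¹,H¹) = ℰ(E⁰,H⁰). -/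

import Mathlib

open Matrix

/-- The n×n circulant matrix with 1 on the diagonal and 1/2 on the (mod n)
super- and sub-diagonals. -/
noncomputable def matA (n : ℕ) [NeZero n] : Matrix (Fin n) (Fin n) ℝ :=
  fun i j => if j = i then 1 else if j = i + 1 ∨ j = i - 1 then (1 : ℝ)/2 else 0

/-- The n×n circulant central-difference matrix with 1 on the (mod n)
super-diagonal and -1 on the (mod n) sub-diagonal. -/
def matB (n : ℕ) [NeZero n] : Matrix (Fin n) (Fin n) ℝ :=
  fun i j => if j = i + 1 then 1 else if j = i - 1 then -1 else 0

/-- The 2n×2n block-diagonal matrix diag(A, A). -/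
noncomputable def calA (n : ℕ) [NeZero n] : Matrix (Fin n ⊕ Fin n) (Fin n ⊕ Fin n) ℝ :=
  Matrix.fromBlocks (matA n) 0 0 (matA n)

/-- The 2n×2n block matrix [[0, B],[B, 0]]. -/
def calB (n : ℕ) [NeZero n] : Matrix (Fin n ⊕ Fin n) (Fin n ⊕ Fin n) ℝ :=
  Matrix.fromBlocks 0 (matB n) (matB n) 0

/-- One implicit-midpoint stage relation along a one-dimensional slice:
the stacked vector (ε(u'−u), μ(v'−v)) equals c · 𝒜⁻¹ℬ applied to the
stacked midpoint vector ((u'+u)/2, (v'+v)/2). -/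
noncomputable def stageRel (n : ℕ) [NeZero n] (ε μ c : ℝ)
    (u u' v v' : Fin n → ℝ) : Prop :=
  Sum.elim (fun i => ε * (u' i - u i)) (fun i => μ * (v' i - v i)) =
    c • (((calA n)⁻¹ * calB n) *ᵥ
      Sum.elim (fun i => (u' i + u i) / 2) (fun i => (v' i + v i) / 2))

/-- The discrete electromagnetic energy of grid fields (E₁,E₂,E₃), (H₁,H₂,H₃). -/
noncomputable def discreteEnergy {I J K : ℕ} (ε μ : ℝ)
    (E1 E2 E3 H1 H2 H3 : Fin I × Fin J × Fin K → ℝ) : ℝ :=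
  ε * (∑ p, E1 p ^ 2 + ∑ p, E2 p ^ 2 + ∑ p, E3 p ^ 2) +
    μ * (∑ p, H1 p ^ 2 + ∑ p, H2 p ^ 2 + ∑ p, H3 p ^ 2)

open scoped Fin.NatCast Fin.CommRing

lemma fin_eq_iff1 (n : ℕ) [NeZero n] (i j : Fin n) : (j = i) ↔ (i - j = 0) := by
  constructor <;> intro h
  · simp [h]
  · exact (sub_eq_zero.mp h).symm

lemma fin_eq_iff2 (n : ℕ) [NeZero n] (i j : Fin n) : (j = i + 1) ↔ (i - j = -1) := by
  constructor <;> intro h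
  · rw [h]; ring
  · have h2 : j = i - (i - j) := by ring
    rw [h] at h2; rw [h2]; ring

lemma fin_eq_iff3 (n : ℕ) [NeZero n] (i j : Fin n) : (j = i - 1) ↔ (i - j = 1) := by
  constructor <;> intro h
  · rw [h]; ring
  · have h2 : j = i - (i - j) := by ring
    rw [h] at h2; rw [h2]

lemma matA_circ (n : ℕ) [NeZero n] :
    matA n = Matrix.circulant (fun d : Fin n => if d = 0 then 1 else if d = -1 ∨ d = 1 then (1:ℝ)/2 else 0) := by
  ext i j
  simp only [matA, Matrix.circulant_apply]
  rw [if_congr (fin_eq_iff1 n i j) rfl rfl,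
    if_congr (or_congr (fin_eq_iff2 n i j) (fin_eq_iff3 n i j)) rfl rfl]

lemma matB_circ (n : ℕ) [NeZero n] :
    matB n = Matrix.circulant (fun d : Fin n => if d = -1 then 1 else if d = 1 then (-1:ℝ) else 0) := by
  ext i j
  simp only [matB, Matrix.circulant_apply]
  rw [if_congr (fin_eq_iff2 n i j) rfl rfl, if_congr (fin_eq_iff3 n i j) rfl rfl]

lemma matA_symm (n : ℕ) [NeZero n] : (matA n)ᵀ = matA n := by
  conv_lhs => rw [matA_circ]
  rw [Matrix.transpose_circulant, matA_circ, circulant_inj]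
  funext d
  have h : (-d = -1 ∨ -d = 1) ↔ (d = -1 ∨ d = 1) := by
    rw [neg_inj, neg_eq_iff_eq_neg]; exact or_comm
  exact if_congr neg_eq_zero rfl (if_congr h rfl rfl)

lemma one_ne_negone_fin (n : ℕ) [NeZero n] (hn : 3 ≤ n) : (1 : Fin n) ≠ -1 := by
  intro h
  have h2 : (1 : Fin n) + 1 = 0 := by linear_combination h
  have h3 : ((2 : ℕ) : Fin n) = 0 := by rw [Nat.cast_ofNat, ← one_add_one_eq_two]; exact h2
  rw [Fin.natCast_eq_zero] at h3
  have := Nat.le_of_dvd (by norm_num) h3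
  omega

lemma matB_skew (n : ℕ) [NeZero n] (hn : 3 ≤ n) : (matB n)ᵀ = -(matB n) := by
  have key : (fun d : Fin n => if -d = -1 then (1:ℝ) else if -d = 1 then -1 else 0) =
      (-(fun d : Fin n => if d = -1 then (1:ℝ) else if d = 1 then -1 else 0)) := by
    funext d
    have e1 : (-d = -1) ↔ (d = 1) := neg_inj
    have e2 : (-d = 1) ↔ (d = -1) := neg_eq_iff_eq_neg
    rw [if_congr e1 rfl (if_congr e2 rfl rfl)]
    simp only [Pi.neg_apply]
    by_cases h1 : d = 1
    · simp [h1, (one_ne_negone_fin n hn)]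
    · by_cases h2 : d = -1
      · simp only [h1, h2, if_true, if_false]
        rw [if_neg (one_ne_negone_fin n hn).symm]
      · simp [h1, h2]
  conv_lhs => rw [matB_circ]
  rw [Matrix.transpose_circulant, key, Matrix.circulant_neg, ← matB_circ]

lemma matAB_comm (n : ℕ) [NeZero n] : matA n * matB n = matB n * matA n := by
  rw [matA_circ, matB_circ, Matrix.circulant_mul_comm]

lemma calA_symm (n : ℕ) [NeZero n] : (calA n)ᵀ = calA n := by
  simp [calA, Matrix.fromBlocks_transpose, matA_symm]

lemma calB_skew (n : ℕ) [NeZero n] (hn : 3 ≤ n) : (calB n)ᵀ = -(calB n) := by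
  simp [calB, Matrix.fromBlocks_transpose, matB_skew n hn, Matrix.fromBlocks_neg]

lemma calAB_comm (n : ℕ) [NeZero n] : calA n * calB n = calB n * calA n := by
  simp [calA, calB, Matrix.fromBlocks_multiply, matAB_comm]

lemma skew_inv_mul {m : Type*} [Fintype m] [DecidableEq m]
    (A B : Matrix m m ℝ) (hA : Aᵀ = A) (hB : Bᵀ = -B) (hc : A * B = B * A) :
    (A⁻¹ * B)ᵀ = -(A⁻¹ * B) := by
  by_cases h : IsUnit A.det
  · have hcomm : A⁻¹ * B = B * A⁻¹ := by
      calc A⁻¹ * B = A⁻¹ * B * (A * A⁻¹) := by rw [Matrix.mul_nonsing_inv A h, Matrix.mul_one]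
        _ = A⁻¹ * (B * A) * A⁻¹ := by noncomm_ring
        _ = A⁻¹ * (A * B) * A⁻¹ := by rw [hc]
        _ = B * A⁻¹ := by
              rw [show A⁻¹ * (A * B) * A⁻¹ = (A⁻¹ * A) * (B * A⁻¹) by noncomm_ring,
                Matrix.nonsing_inv_mul A h, Matrix.one_mul]
    rw [Matrix.transpose_mul, Matrix.transpose_nonsing_inv, hA, hB, hcomm]
    simp [Matrix.neg_mul, Matrix.mul_neg]
  · rw [Matrix.nonsing_inv_apply_not_isUnit A h]
    simp

lemma skew_quadratic_zero {m : Type*} [Fintype m] (M : Matrix m m ℝ) (hM : Mᵀ = -M)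
    (v : m → ℝ) : (M *ᵥ v) ⬝ᵥ v = 0 := by
  have h1 : (M *ᵥ v) ⬝ᵥ v = v ⬝ᵥ (M *ᵥ v) := dotProduct_comm _ _
  have h2 : v ⬝ᵥ (M *ᵥ v) = (Mᵀ *ᵥ v) ⬝ᵥ v := by
    rw [Matrix.dotProduct_mulVec, Matrix.mulVec_transpose]
  rw [hM] at h2
  have h3 : ((-M) *ᵥ v) ⬝ᵥ v = -((M *ᵥ v) ⬝ᵥ v) := by
    rw [Matrix.neg_mulVec, neg_dotProduct]
  linarith [h1.trans (h2.trans h3)]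

lemma stage_energy {n : ℕ} [NeZero n] (hn : 3 ≤ n) (ε μ c : ℝ)
    (u u' v v' : Fin n → ℝ) (h : stageRel n ε μ c u u' v v') :
    ε * ∑ i, u' i ^ 2 + μ * ∑ i, v' i ^ 2 = ε * ∑ i, u i ^ 2 + μ * ∑ i, v i ^ 2 := by
  set M := (calA n)⁻¹ * calB n with hM
  have hskew : Mᵀ = -M := skew_inv_mul _ _ (calA_symm n) (calB_skew n hn) (calAB_comm n)
  set mid : Fin n ⊕ Fin n → ℝ :=
    Sum.elim (fun i => (u' i + u i) / 2) (fun i => (v' i + v i) / 2) with hmid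
  have h0 : (Sum.elim (fun i => ε * (u' i - u i)) (fun i => μ * (v' i - v i))) ⬝ᵥ mid = 0 := by
    rw [stageRel] at h
    rw [h, ← hM, ← hmid, smul_dotProduct, skew_quadratic_zero M hskew, smul_zero]
  have h1 : (Sum.elim (fun i => ε * (u' i - u i)) (fun i => μ * (v' i - v i))) ⬝ᵥ mid =
      (∑ i, (ε * (u' i - u i)) * ((u' i + u i) / 2)) +
      (∑ i, (μ * (v' i - v i)) * ((v' i + v i) / 2)) := by
    simp [dotProduct, hmid, Fintype.sum_sum_type]
  have e1 : (∑ i, (ε * (u' i - u i)) * ((u' i + u i) / 2)) =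
      ε / 2 * (∑ i, u' i ^ 2) - ε / 2 * (∑ i, u i ^ 2) := by
    rw [Finset.mul_sum, Finset.mul_sum, ← Finset.sum_sub_distrib]
    exact Finset.sum_congr rfl fun i _ => by ring
  have e2 : (∑ i, (μ * (v' i - v i)) * ((v' i + v i) / 2)) =
      μ / 2 * (∑ i, v' i ^ 2) - μ / 2 * (∑ i, v i ^ 2) := by
    rw [Finset.mul_sum, Finset.mul_sum, ← Finset.sum_sub_distrib]
    exact Finset.sum_congr rfl fun i _ => by ring
  rw [h1, e1, e2] at h0
  linarith

lemma pair_sum {α : Type*} [Fintype α] {n : ℕ} [NeZero n] (hn : 3 ≤ n) (ε μ c : ℝ)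
    (u u' v v' : α → Fin n → ℝ) (h : ∀ a, stageRel n ε μ c (u a) (u' a) (v a) (v' a)) :
    ε * ∑ a, ∑ i, u' a i ^ 2 + μ * ∑ a, ∑ i, v' a i ^ 2 =
      ε * ∑ a, ∑ i, u a i ^ 2 + μ * ∑ a, ∑ i, v a i ^ 2 := by
  rw [Finset.mul_sum, Finset.mul_sum, Finset.mul_sum, Finset.mul_sum,
    ← Finset.sum_add_distrib, ← Finset.sum_add_distrib]
  exact Finset.sum_congr rfl fun a _ => stage_energy hn ε μ c _ _ _ _ (h a)

lemma rot_energy (ε μ t E H : ℝ) (hε : 0 < ε) (hμ : 0 < μ) :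
    ε * (Real.cos t * E - Real.sqrt (μ / ε) * Real.sin t * H) ^ 2 +
      μ * (Real.sqrt (ε / μ) * Real.sin t * E + Real.cos t * H) ^ 2 =
    ε * E ^ 2 + μ * H ^ 2 := by
  have hcs : Real.sin t ^ 2 + Real.cos t ^ 2 = 1 := Real.sin_sq_add_cos_sq t
  have h1 : ε * Real.sqrt (μ / ε) ^ 2 = μ := by
    rw [Real.sq_sqrt (by positivity)]; field_simp
  have h2 : μ * Real.sqrt (ε / μ) ^ 2 = ε := by
    rw [Real.sq_sqrt (by positivity)]; field_simp
  have h3 : ε * Real.sqrt (μ / ε) = μ * Real.sqrt (ε / μ) := by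
    have hs : Real.sqrt (ε / μ) ^ 2 = ε / μ := Real.sq_sqrt (by positivity)
    have hspos : 0 < Real.sqrt (ε / μ) := Real.sqrt_pos.mpr (by positivity)
    rw [show (μ / ε) = (ε / μ)⁻¹ by field_simp, Real.sqrt_inv]
    field_simp
    rw [hs]; field_simp
  linear_combination (H ^ 2 * Real.sin t ^ 2) * h1 + (E ^ 2 * Real.sin t ^ 2) * h2 -
    (2 * Real.cos t * Real.sin t * E * H) * h3 + (ε * E ^ 2 + μ * H ^ 2) * hcs

lemma sum_x {I J K : ℕ} (f : Fin I × Fin J × Fin K → ℝ) :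
    ∑ p, f p = ∑ a : Fin J × Fin K, ∑ i, f (i, a.1, a.2) := by
  rw [Fintype.sum_prod_type]
  exact Finset.sum_comm

lemma sum_y {I J K : ℕ} (f : Fin I × Fin J × Fin K → ℝ) :
    ∑ p, f p = ∑ a : Fin I × Fin K, ∑ j, f (a.1, j, a.2) := by
  calc ∑ p, f p = ∑ i, ∑ j, ∑ k, f (i, j, k) := by
        rw [Fintype.sum_prod_type]
        exact Finset.sum_congr rfl fun i _ => Fintype.sum_prod_type _
    _ = ∑ i, ∑ k, ∑ j, f (i, j, k) := Finset.sum_congr rfl fun i _ => Finset.sum_comm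
    _ = ∑ a : Fin I × Fin K, ∑ j, f (a.1, j, a.2) :=
        (Fintype.sum_prod_type (fun a : Fin I × Fin K => ∑ j, f (a.1, j, a.2))).symm

lemma sum_z {I J K : ℕ} (f : Fin I × Fin J × Fin K → ℝ) :
    ∑ p, f p = ∑ a : Fin I × Fin J, ∑ k, f (a.1, a.2, k) := by
  calc ∑ p, f p = ∑ i, ∑ j, ∑ k, f (i, j, k) := by
        rw [Fintype.sum_prod_type]
        exact Finset.sum_congr rfl fun i _ => Fintype.sum_prod_type _
    _ = ∑ a : Fin I × Fin J, ∑ k, f (a.1, a.2, k) :=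
        (Fintype.sum_prod_type (fun a : Fin I × Fin J => ∑ k, f (a.1, a.2, k))).symm

lemma rot_sum {P : Type*} [Fintype P] (ε μ : ℝ) (hε : 0 < ε) (hμ : 0 < μ)
    (t E H E' H' : P → ℝ)
    (hE : ∀ p, E' p = Real.cos (t p) * E p - Real.sqrt (μ/ε) * Real.sin (t p) * H p)
    (hH : ∀ p, H' p = Real.sqrt (ε/μ) * Real.sin (t p) * E p + Real.cos (t p) * H p) :
    ε * ∑ p, E' p ^ 2 + μ * ∑ p, H' p ^ 2 = ε * ∑ p, E p ^ 2 + μ * ∑ p, H p ^ 2 := by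
  rw [Finset.mul_sum, Finset.mul_sum, Finset.mul_sum, Finset.mul_sum,
    ← Finset.sum_add_distrib, ← Finset.sum_add_distrib]
  refine Finset.sum_congr rfl fun p _ => ?_
  rw [hE p, hH p]
  exact rot_energy ε μ (t p) (E p) (H p) hε hμ


/-- Discrete energy conservation of Splitting method II. -/
theorem splittingII_energy_conservation
    (I J K : ℕ) [NeZero I] [NeZero J] [NeZero K]
    (hI : 3 ≤ I) (hJ : 3 ≤ J) (hK : 3 ≤ K)
    (hIo : Odd I) (hJo : Odd J) (hKo : Odd K)
    (ε μ τ hx hy hz : ℝ) (hε : 0 < ε) (hμ : 0 < μ) (hτ : 0 < τ)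
    (hhx : 0 < hx) (hhy : 0 < hy) (hhz : 0 < hz) (lam : ℝ)
    (E1n E2n E3n H1n H2n H3n E1a E2a E3a H1a H2a H3a
      E1b E2b E3b H1b H2b H3b E1c E2c E3c H1c H2c H3c
      E1f E2f E3f H1f H2f H3f : Fin I × Fin J × Fin K → ℝ)
    (θ : Fin I × Fin J × Fin K → ℝ)
    -- Stage 1: from (Eⁿ, Hⁿ) to (E^{[1]}, H^{[1]})
    (hs1E1 : E1a = E1n) (hs1H1 : H1a = H1n)
    (hs1x1 : ∀ (j : Fin J) (k : Fin K), stageRel I ε μ (-(τ / hx))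
      (fun i => E2n (i, j, k)) (fun i => E2a (i, j, k))
      (fun i => H3n (i, j, k)) (fun i => H3a (i, j, k)))
    (hs1x2 : ∀ (j : Fin J) (k : Fin K), stageRel I ε μ (τ / hx)
      (fun i => E3n (i, j, k)) (fun i => E3a (i, j, k))
      (fun i => H2n (i, j, k)) (fun i => H2a (i, j, k)))
    -- Stage 2: from (E^{[1]}, H^{[1]}) to (E^{[2]}, H^{[2]})
    (hs2E2 : E2b = E2a) (hs2H2 : H2b = H2a)
    (hs2y1 : ∀ (i : Fin I) (k : Fin K), stageRel J ε μ (-(τ / hy))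
      (fun j => E3a (i, j, k)) (fun j => E3b (i, j, k))
      (fun j => H1a (i, j, k)) (fun j => H1b (i, j, k)))
    (hs2y2 : ∀ (i : Fin I) (k : Fin K), stageRel J ε μ (τ / hy)
      (fun j => E1a (i, j, k)) (fun j => E1b (i, j, k))
      (fun j => H3a (i, j, k)) (fun j => H3b (i, j, k)))
    -- Stage 3: from (E^{[2]}, H^{[2]}) to (E^{[3]}, H^{[3]})
    (hs3E3 : E3c = E3b) (hs3H3 : H3c = H3b)
    (hs3z1 : ∀ (i : Fin I) (j : Fin J), stageRel K ε μ (-(τ / hz))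
      (fun k => E1b (i, j, k)) (fun k => E1c (i, j, k))
      (fun k => H2b (i, j, k)) (fun k => H2c (i, j, k)))
    (hs3z2 : ∀ (i : Fin I) (j : Fin J), stageRel K ε μ (τ / hz)
      (fun k => E2b (i, j, k)) (fun k => E2c (i, j, k))
      (fun k => H1b (i, j, k)) (fun k => H1c (i, j, k)))
    -- Stage 4: pointwise rotation by the noise increment
    (hs4E1 : ∀ p, E1f p = Real.cos (lam * θ p / Real.sqrt (ε * μ)) * E1c p -
      Real.sqrt (μ / ε) * Real.sin (lam * θ p / Real.sqrt (ε * μ)) * H1c p)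
    (hs4E2 : ∀ p, E2f p = Real.cos (lam * θ p / Real.sqrt (ε * μ)) * E2c p -
      Real.sqrt (μ / ε) * Real.sin (lam * θ p / Real.sqrt (ε * μ)) * H2c p)
    (hs4E3 : ∀ p, E3f p = Real.cos (lam * θ p / Real.sqrt (ε * μ)) * E3c p -
      Real.sqrt (μ / ε) * Real.sin (lam * θ p / Real.sqrt (ε * μ)) * H3c p)
    (hs4H1 : ∀ p, H1f p = Real.sqrt (ε / μ) *
      Real.sin (lam * θ p / Real.sqrt (ε * μ)) * E1c p +
      Real.cos (lam * θ p / Real.sqrt (ε * μ)) * H1c p)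
    (hs4H2 : ∀ p, H2f p = Real.sqrt (ε / μ) *
      Real.sin (lam * θ p / Real.sqrt (ε * μ)) * E2c p +
      Real.cos (lam * θ p / Real.sqrt (ε * μ)) * H2c p)
    (hs4H3 : ∀ p, H3f p = Real.sqrt (ε / μ) *
      Real.sin (lam * θ p / Real.sqrt (ε * μ)) * E3c p +
      Real.cos (lam * θ p / Real.sqrt (ε * μ)) * H3c p) :
    discreteEnergy ε μ E1f E2f E3f H1f H2f H3f =
      discreteEnergy ε μ E1n E2n E3n H1n H2n H3n := by
  set t : Fin I × Fin J × Fin K → ℝ := fun p => lam * θ p / Real.sqrt (ε * μ) with ht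
  -- Stage 1
  have hA1 : ∑ p, E1a p ^ 2 = ∑ p, E1n p ^ 2 := by rw [hs1E1]
  have hA1' : ∑ p, H1a p ^ 2 = ∑ p, H1n p ^ 2 := by rw [hs1H1]
  have hx1 : ε * ∑ p, E2a p ^ 2 + μ * ∑ p, H3a p ^ 2 =
      ε * ∑ p, E2n p ^ 2 + μ * ∑ p, H3n p ^ 2 := by
    rw [sum_x (fun p => E2a p ^ 2), sum_x (fun p => H3a p ^ 2),
      sum_x (fun p => E2n p ^ 2), sum_x (fun p => H3n p ^ 2)]
    exact pair_sum (α := Fin J × Fin K) hI ε μ (-(τ/hx)) (fun a i => E2n (i, a.1, a.2))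
      (fun a i => E2a (i, a.1, a.2)) (fun a i => H3n (i, a.1, a.2))
      (fun a i => H3a (i, a.1, a.2)) (fun a => hs1x1 a.1 a.2)
  have hx2 : ε * ∑ p, E3a p ^ 2 + μ * ∑ p, H2a p ^ 2 =
      ε * ∑ p, E3n p ^ 2 + μ * ∑ p, H2n p ^ 2 := by
    rw [sum_x (fun p => E3a p ^ 2), sum_x (fun p => H2a p ^ 2),
      sum_x (fun p => E3n p ^ 2), sum_x (fun p => H2n p ^ 2)]
    exact pair_sum (α := Fin J × Fin K) hI ε μ (τ/hx) (fun a i => E3n (i, a.1, a.2))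
      (fun a i => E3a (i, a.1, a.2)) (fun a i => H2n (i, a.1, a.2))
      (fun a i => H2a (i, a.1, a.2)) (fun a => hs1x2 a.1 a.2)
  -- Stage 2
  have hB2 : ∑ p, E2b p ^ 2 = ∑ p, E2a p ^ 2 := by rw [hs2E2]
  have hB2' : ∑ p, H2b p ^ 2 = ∑ p, H2a p ^ 2 := by rw [hs2H2]
  have hy1 : ε * ∑ p, E3b p ^ 2 + μ * ∑ p, H1b p ^ 2 =
      ε * ∑ p, E3a p ^ 2 + μ * ∑ p, H1a p ^ 2 := by
    rw [sum_y (fun p => E3b p ^ 2), sum_y (fun p => H1b p ^ 2),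
      sum_y (fun p => E3a p ^ 2), sum_y (fun p => H1a p ^ 2)]
    exact pair_sum (α := Fin I × Fin K) hJ ε μ (-(τ/hy)) (fun a j => E3a (a.1, j, a.2))
      (fun a j => E3b (a.1, j, a.2)) (fun a j => H1a (a.1, j, a.2))
      (fun a j => H1b (a.1, j, a.2)) (fun a => hs2y1 a.1 a.2)
  have hy2 : ε * ∑ p, E1b p ^ 2 + μ * ∑ p, H3b p ^ 2 =
      ε * ∑ p, E1a p ^ 2 + μ * ∑ p, H3a p ^ 2 := by
    rw [sum_y (fun p => E1b p ^ 2), sum_y (fun p => H3b p ^ 2),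
      sum_y (fun p => E1a p ^ 2), sum_y (fun p => H3a p ^ 2)]
    exact pair_sum (α := Fin I × Fin K) hJ ε μ (τ/hy) (fun a j => E1a (a.1, j, a.2))
      (fun a j => E1b (a.1, j, a.2)) (fun a j => H3a (a.1, j, a.2))
      (fun a j => H3b (a.1, j, a.2)) (fun a => hs2y2 a.1 a.2)
  -- Stage 3
  have hC3 : ∑ p, E3c p ^ 2 = ∑ p, E3b p ^ 2 := by rw [hs3E3]
  have hC3' : ∑ p, H3c p ^ 2 = ∑ p, H3b p ^ 2 := by rw [hs3H3]
  have hz1 : ε * ∑ p, E1c p ^ 2 + μ * ∑ p, H2c p ^ 2 =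
      ε * ∑ p, E1b p ^ 2 + μ * ∑ p, H2b p ^ 2 := by
    rw [sum_z (fun p => E1c p ^ 2), sum_z (fun p => H2c p ^ 2),
      sum_z (fun p => E1b p ^ 2), sum_z (fun p => H2b p ^ 2)]
    exact pair_sum (α := Fin I × Fin J) hK ε μ (-(τ/hz)) (fun a k => E1b (a.1, a.2, k))
      (fun a k => E1c (a.1, a.2, k)) (fun a k => H2b (a.1, a.2, k))
      (fun a k => H2c (a.1, a.2, k)) (fun a => hs3z1 a.1 a.2)
  have hz2 : ε * ∑ p, E2c p ^ 2 + μ * ∑ p, H1c p ^ 2 =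
      ε * ∑ p, E2b p ^ 2 + μ * ∑ p, H1b p ^ 2 := by
    rw [sum_z (fun p => E2c p ^ 2), sum_z (fun p => H1c p ^ 2),
      sum_z (fun p => E2b p ^ 2), sum_z (fun p => H1b p ^ 2)]
    exact pair_sum (α := Fin I × Fin J) hK ε μ (τ/hz) (fun a k => E2b (a.1, a.2, k))
      (fun a k => E2c (a.1, a.2, k)) (fun a k => H1b (a.1, a.2, k))
      (fun a k => H1c (a.1, a.2, k)) (fun a => hs3z2 a.1 a.2)
  -- Stage 4
  have hr1 : ε * ∑ p, E1f p ^ 2 + μ * ∑ p, H1f p ^ 2 =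
      ε * ∑ p, E1c p ^ 2 + μ * ∑ p, H1c p ^ 2 :=
    rot_sum ε μ hε hμ t E1c H1c E1f H1f (fun p => hs4E1 p) (fun p => hs4H1 p)
  have hr2 : ε * ∑ p, E2f p ^ 2 + μ * ∑ p, H2f p ^ 2 =
      ε * ∑ p, E2c p ^ 2 + μ * ∑ p, H2c p ^ 2 :=
    rot_sum ε μ hε hμ t E2c H2c E2f H2f (fun p => hs4E2 p) (fun p => hs4H2 p)
  have hr3 : ε * ∑ p, E3f p ^ 2 + μ * ∑ p, H3f p ^ 2 =
      ε * ∑ p, E3c p ^ 2 + μ * ∑ p, H3c p ^ 2 :=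
    rot_sum ε μ hε hμ t E3c H3c E3f H3f (fun p => hs4E3 p) (fun p => hs4H3 p)
  unfold discreteEnergy
  ring_nf
  ring_nf at hA1 hA1' hx1 hx2 hB2 hB2' hy1 hy2 hC3 hC3' hz1 hz2 hr1 hr2 hr3
  linarith [hx1, hx2, hy1, hy2, hz1, hz2, hr1, hr2, hr3,
    congrArg (fun x => ε * x) hA1, congrArg (fun x => μ * x) hA1',
    congrArg (fun x => ε * x) hB2, congrArg (fun x => μ * x) hB2',
    congrArg (fun x => ε * x) hC3, congrArg (fun x => μ * x) hC3']
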